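/- arXiv:math/0311490 — 3 statements merged into one kernel-verified Lean document; each statement's English description precedes it below -/
import Mathlib

section
/- For n ≥ 3, the map defined on the generators of the free metabelian group M_n by g_i ↦ [[g_1,g_2]g_n, g_i]·g_i for 1 ≤ i < n and g_n ↦ [g_1,g_2]·g_n extends to a well-defined automorphism α_n of M_n. -/
/-- The free metabelian group of rank `n`: the quotient of the free group on `n` generators
by the second term of its derived series (the second derived subgroup). -/
abbrev FreeMetabelian (n : ℕ) :=
  FreeGroup (Fin n) ⧸ derivedSeries (FreeGroup (Fin n)) 2

instance (n : ℕ) : (derivedSeries (FreeGroup (Fin n)) 2).Normal :=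
  derivedSeries_normal _ _

/-- The generators of the free metabelian group; `gen n i` is the image of the free
generator `g_{i+1}` of the paper (indices are `0`-based). -/
def gen (n : ℕ) (i : Fin n) : FreeMetabelian n :=
  QuotientGroup.mk (FreeGroup.of i)

open scoped commutatorElement

/-- For `n ≥ 3`, the assignment `gᵢ ↦ [[g₁,g₂]gₙ, gᵢ]·gᵢ` for `i < n` and
`gₙ ↦ [g₁,g₂]·gₙ` extends to a (well-defined) automorphism of the free metabelian group. -/
theorem exists_automorphism_alpha (n : ℕ) (hn : 3 ≤ n) :
    ∃ α : FreeMetabelian n ≃* FreeMetabelian n,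
      (∀ i : Fin n, (i : ℕ) < n - 1 →
        α (gen n i) =
          ⁅⁅gen n ⟨0, by omega⟩, gen n ⟨1, by omega⟩⁆ * gen n ⟨n - 1, by omega⟩, gen n i⁆ *
            gen n i) ∧
      α (gen n ⟨n - 1, by omega⟩) =
        ⁅gen n ⟨0, by omega⟩, gen n ⟨1, by omega⟩⁆ * gen n ⟨n - 1, by omega⟩ := by
  have h0 : (0 : ℕ) < n := by omega
  have h1 : (1 : ℕ) < n := by omega
  have hl : n - 1 < n := by omega
  set i0 : Fin n := ⟨0, h0⟩
  set i1 : Fin n := ⟨1, h1⟩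
  set il : Fin n := ⟨n - 1, hl⟩
  have h0l : i0 ≠ il := by simp [i0, il, Fin.ext_iff]; omega
  have h1l : i1 ≠ il := by simp [i1, il, Fin.ext_iff]; omega
  -- the free group endomorphisms
  set f : FreeGroup (Fin n) →* FreeGroup (Fin n) :=
    FreeGroup.lift fun i => if i = il then
      ⁅FreeGroup.of i0, FreeGroup.of i1⁆ * FreeGroup.of i else FreeGroup.of i with hf
  set g : FreeGroup (Fin n) →* FreeGroup (Fin n) :=
    FreeGroup.lift fun i => if i = il then
      ⁅FreeGroup.of i0, FreeGroup.of i1⁆⁻¹ * FreeGroup.of i else FreeGroup.of i with hg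
  have hfi : ∀ i, i ≠ il → f (FreeGroup.of i) = FreeGroup.of i := by
    intro i hi; simp [hf, hi]
  have hgi : ∀ i, i ≠ il → g (FreeGroup.of i) = FreeGroup.of i := by
    intro i hi; simp [hg, hi]
  have hgf : g.comp f = MonoidHom.id _ := by
    ext i
    by_cases hi : i = il
    · subst hi
      have e1 : f (FreeGroup.of il) = ⁅FreeGroup.of i0, FreeGroup.of i1⁆ * FreeGroup.of il := by
        simp [hf]
      have e2 : g (FreeGroup.of il) = ⁅FreeGroup.of i0, FreeGroup.of i1⁆⁻¹ * FreeGroup.of il := by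
        simp [hg]
      simp only [MonoidHom.comp_apply, MonoidHom.id_apply, e1, map_mul,
        map_commutatorElement, hgi i0 h0l, hgi i1 h1l, e2]
      group
    · simp [MonoidHom.comp_apply, hfi i hi, hgi i hi]
  have hfg : f.comp g = MonoidHom.id _ := by
    ext i
    by_cases hi : i = il
    · subst hi
      have e2 : g (FreeGroup.of il) = ⁅FreeGroup.of i0, FreeGroup.of i1⁆⁻¹ * FreeGroup.of il := by
        simp [hg]
      have e1 : f (FreeGroup.of il) = ⁅FreeGroup.of i0, FreeGroup.of i1⁆ * FreeGroup.of il := by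
        simp [hf]
      simp only [MonoidHom.comp_apply, MonoidHom.id_apply, e2, map_mul, map_inv,
        map_commutatorElement, hfi i0 h0l, hfi i1 h1l, e1]
      group
    · simp [MonoidHom.comp_apply, hfi i hi, hgi i hi]
  set e : FreeGroup (Fin n) ≃* FreeGroup (Fin n) := MonoidHom.toMulEquiv f g hgf hfg with he
  have hsurj : Function.Surjective e := e.surjective
  have hmap : (derivedSeries (FreeGroup (Fin n)) 2).map (e : FreeGroup (Fin n) →* _)
      = derivedSeries (FreeGroup (Fin n)) 2 := map_derivedSeries_eq hsurj 2
  set β : FreeMetabelian n ≃* FreeMetabelian n := QuotientGroup.congr _ _ e hmap with hβ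
  set c : FreeMetabelian n := ⁅gen n i0, gen n i1⁆ * gen n il with hc
  refine ⟨β.trans (MulAut.conj c), ?_, ?_⟩
  · intro i hi
    have hil : i ≠ il := by simp [il, Fin.ext_iff]; omega
    have : β (gen n i) = gen n i := by
      show QuotientGroup.congr _ _ e hmap (QuotientGroup.mk (FreeGroup.of i)) = _
      rw [QuotientGroup.congr_mk]
      show QuotientGroup.mk (f (FreeGroup.of i)) = _
      rw [hfi i hil]; rfl
    simp only [MulEquiv.trans_apply, this, MulAut.conj_apply]
    show c * gen n i * c⁻¹ = ⁅c, gen n i⁆ * gen n i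
    rw [commutatorElement_def]; group
  · have hβl : β (gen n il) = ⁅gen n i0, gen n i1⁆ * gen n il := by
      show QuotientGroup.congr _ _ e hmap (QuotientGroup.mk (FreeGroup.of il)) = _
      rw [QuotientGroup.congr_mk]
      show QuotientGroup.mk (f (FreeGroup.of il)) = _
      simp only [hf, FreeGroup.lift_apply_of, if_pos rfl]
      rfl
    simp only [MulEquiv.trans_apply, hβl, MulAut.conj_apply]
    show c * c * c⁻¹ = c
    group
end

section
/- The Magnus representation φ of the free metabelian group M_n, which is the group homomorphism sending each generator g_i to the 2×2 matrix with rows (s_i, t_i) and (0, 1) over the commutative ring ℤ[s_1^{±1},…,s_n^{±1}, t_1,…,t_n], is faithful: φ is injective on M_n. -/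
open MvPolynomial

abbrev LaurentRing (n : ℕ) := AddMonoidAlgebra ℤ (Fin n →₀ ℤ)

noncomputable def sVar (n : ℕ) (i : Fin n) : LaurentRing n :=
  AddMonoidAlgebra.single (Finsupp.single i 1) 1

noncomputable def sVarInv (n : ℕ) (i : Fin n) : LaurentRing n :=
  AddMonoidAlgebra.single (-Finsupp.single i 1) 1

lemma sVar_mul_sVarInv (n : ℕ) (i : Fin n) : sVar n i * sVarInv n i = 1 := by
  rw [sVar, sVarInv, AddMonoidAlgebra.single_mul_single, add_neg_cancel, one_mul,
    AddMonoidAlgebra.one_def]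

abbrev MagnusRing (n : ℕ) := MvPolynomial (Fin n) (LaurentRing n)

noncomputable def magnusUnit (n : ℕ) (i : Fin n) : (Matrix (Fin 2) (Fin 2) (MagnusRing n))ˣ where
  val := !![C (sVar n i), X i; 0, 1]
  inv := !![C (sVarInv n i), -(C (sVarInv n i) * X i); 0, 1]
  val_inv := by
    have h : (C (sVar n i) * C (sVarInv n i) : MagnusRing n) = 1 := by
      rw [← map_mul, sVar_mul_sVarInv, map_one]
    rw [Matrix.mul_fin_two, Matrix.one_fin_two]
    have e00 : (C (sVar n i) * C (sVarInv n i) + X i * 0 : MagnusRing n) = 1 := by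
      linear_combination h
    have e01 : (C (sVar n i) * -(C (sVarInv n i) * X i) + X i * 1 : MagnusRing n) = 0 := by
      linear_combination (-(X i) : MagnusRing n) * h
    rw [e00, e01]
    norm_num
  inv_val := by
    have h : (C (sVarInv n i) * C (sVar n i) : MagnusRing n) = 1 := by
      rw [← map_mul, mul_comm, sVar_mul_sVarInv, map_one]
    rw [Matrix.mul_fin_two, Matrix.one_fin_two]
    have e00 : (C (sVarInv n i) * C (sVar n i) + -(C (sVarInv n i) * X i) * 0 :
        MagnusRing n) = 1 := by
      linear_combination h
    have e01 : (C (sVarInv n i) * X i + -(C (sVarInv n i) * X i) * 1 : MagnusRing n) = 0 := by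
      ring
    rw [e00, e01]
    norm_num

section lowerTriv
open scoped commutatorElement
variable {R : Type*} [CommRing R]

def lowerTriv (R : Type*) [CommRing R] : Subgroup (Matrix (Fin 2) (Fin 2) R)ˣ where
  carrier := {A | A.val 1 0 = 0 ∧ A.val 1 1 = 1}
  one_mem' := ⟨by simp, by simp⟩
  mul_mem' := by
    rintro A B ⟨ha0, ha1⟩ ⟨hb0, hb1⟩
    constructor <;>
      simp [Units.val_mul, Matrix.mul_apply, Fin.sum_univ_two, ha0, ha1, hb0, hb1]
  inv_mem' := by
    rintro A ⟨h0, h1⟩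
    have key : ∀ j, A.inv 1 j = (1 : Matrix (Fin 2) (Fin 2) R) 1 j := by
      intro j
      have h : (A.val * A.inv) 1 j = (1 : Matrix (Fin 2) (Fin 2) R) 1 j := by
        rw [A.val_inv]
      rwa [Matrix.mul_apply, Fin.sum_univ_two, h0, h1, zero_mul, one_mul, zero_add] at h
    exact ⟨by simpa using key 0, by simpa using key 1⟩

lemma mem_lowerTriv {A : (Matrix (Fin 2) (Fin 2) R)ˣ} :
    A ∈ lowerTriv R ↔ A.val 1 0 = 0 ∧ A.val 1 1 = 1 := Iff.rfl

lemma lowerTriv_mul_apply_zero_zero {A B : (Matrix (Fin 2) (Fin 2) R)ˣ}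
    (hB : B ∈ lowerTriv R) :
    (A * B).val 0 0 = A.val 0 0 * B.val 0 0 := by
  obtain ⟨hb0, -⟩ := mem_lowerTriv.mp hB
  simp [Units.val_mul, Matrix.mul_apply, Fin.sum_univ_two, hb0]

lemma lowerTriv_inv_zero_zero {A : (Matrix (Fin 2) (Fin 2) R)ˣ}
    (hA : A ∈ lowerTriv R) :
    A.val 0 0 * (A⁻¹).val 0 0 = 1 := by
  have h := lowerTriv_mul_apply_zero_zero (A := A) (B := A⁻¹) ((lowerTriv R).inv_mem hA)
  rw [mul_inv_cancel] at h
  simpa using h.symm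

def upperUni (R : Type*) [CommRing R] : Subgroup (Matrix (Fin 2) (Fin 2) R)ˣ where
  carrier := {A | A.val 0 0 = 1 ∧ A.val 1 0 = 0 ∧ A.val 1 1 = 1}
  one_mem' := ⟨by simp, by simp, by simp⟩
  mul_mem' := by
    rintro A B ⟨ha, ha0, ha1⟩ ⟨hb, hb0, hb1⟩
    refine ⟨?_, ?_, ?_⟩ <;>
      simp [Units.val_mul, Matrix.mul_apply, Fin.sum_univ_two, ha, ha0, ha1, hb, hb0, hb1]
  inv_mem' := by
    rintro A ⟨ha, ha0, ha1⟩
    have hmem : A ∈ lowerTriv R := ⟨ha0, ha1⟩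
    obtain ⟨h0, h1⟩ := mem_lowerTriv.mp ((lowerTriv R).inv_mem hmem)
    have h := lowerTriv_inv_zero_zero hmem
    rw [ha, one_mul] at h
    exact ⟨h, h0, h1⟩

lemma mem_upperUni {A : (Matrix (Fin 2) (Fin 2) R)ˣ} :
    A ∈ upperUni R ↔ A.val 0 0 = 1 ∧ A.val 1 0 = 0 ∧ A.val 1 1 = 1 := Iff.rfl

lemma upperUni_comm {A B : (Matrix (Fin 2) (Fin 2) R)ˣ}
    (hA : A ∈ upperUni R) (hB : B ∈ upperUni R) : A * B = B * A := by
  obtain ⟨ha, ha0, ha1⟩ := mem_upperUni.mp hA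
  obtain ⟨hb, hb0, hb1⟩ := mem_upperUni.mp hB
  ext : 1
  rw [Units.val_mul, Units.val_mul, Matrix.eta_fin_two A.val, Matrix.eta_fin_two B.val,
    ha, ha0, ha1, hb, hb0, hb1, Matrix.mul_fin_two, Matrix.mul_fin_two]
  ring_nf

lemma commutator_mem_upperUni {A B : (Matrix (Fin 2) (Fin 2) R)ˣ}
    (hA : A ∈ lowerTriv R) (hB : B ∈ lowerTriv R) : ⁅A, B⁆ ∈ upperUni R := by
  have hAi := (lowerTriv R).inv_mem hA
  have hBi := (lowerTriv R).inv_mem hB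
  have hmem : ⁅A, B⁆ ∈ lowerTriv R :=
    Subgroup.mul_mem _ (Subgroup.mul_mem _ (Subgroup.mul_mem _ hA hB) hAi) hBi
  obtain ⟨hc0, hc1⟩ := mem_lowerTriv.mp hmem
  refine mem_upperUni.mpr ⟨?_, hc0, hc1⟩
  show (A * B * A⁻¹ * B⁻¹).val 0 0 = 1
  rw [lowerTriv_mul_apply_zero_zero hBi, lowerTriv_mul_apply_zero_zero hAi,
    lowerTriv_mul_apply_zero_zero hB]
  have h1 := lowerTriv_inv_zero_zero hA
  have h2 := lowerTriv_inv_zero_zero hB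
  calc A.val 0 0 * B.val 0 0 * (A⁻¹).val 0 0 * (B⁻¹).val 0 0
      = (A.val 0 0 * (A⁻¹).val 0 0) * (B.val 0 0 * (B⁻¹).val 0 0) := by ring
    _ = 1 := by rw [h1, h2, one_mul]

lemma derivedSeries_two_map_eq_one {G : Type*} [Group G]
    (f : G →* (Matrix (Fin 2) (Fin 2) R)ˣ) (hf : ∀ g, f g ∈ lowerTriv R) :
    ∀ x ∈ derivedSeries G 2, f x = 1 := by
  have h1 : derivedSeries G 1 ≤ (upperUni R).comap f := by
    have e : derivedSeries G 1 = ⁅derivedSeries G 0, derivedSeries G 0⁆ :=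
      derivedSeries_succ G 0
    rw [e, Subgroup.commutator_le]
    intro g _ h _
    simp only [Subgroup.mem_comap, map_commutatorElement]
    exact commutator_mem_upperUni (hf g) (hf h)
  have h2 : derivedSeries G 2 ≤ f.ker := by
    have e : derivedSeries G 2 = ⁅derivedSeries G 1, derivedSeries G 1⁆ :=
      derivedSeries_succ G 1
    rw [e, Subgroup.commutator_le]
    intro g hg h hh
    rw [MonoidHom.mem_ker, map_commutatorElement, commutatorElement_eq_one_iff_mul_comm]
    exact upperUni_comm (h1 hg) (h1 hh)
  exact fun x hx => h2 hx

end lowerTriv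

/-- The Magnus representation on the free group. -/
noncomputable def magnusFree (n : ℕ) :
    FreeGroup (Fin n) →* (Matrix (Fin 2) (Fin 2) (MagnusRing n))ˣ :=
  FreeGroup.lift (magnusUnit n)

lemma magnusFree_mem_lowerTriv (n : ℕ) (g : FreeGroup (Fin n)) :
    magnusFree n g ∈ lowerTriv (MagnusRing n) := by
  refine FreeGroup.range_lift_le (s := lowerTriv (MagnusRing n)) ?_ ⟨g, rfl⟩
  rintro A ⟨i, rfl⟩
  exact ⟨by simp [magnusUnit], by simp [magnusUnit]⟩

/-- The Magnus representation of the free metabelian group. -/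
noncomputable def Magnus (n : ℕ) :
    FreeMetabelian n →* (Matrix (Fin 2) (Fin 2) (MagnusRing n))ˣ :=
  QuotientGroup.lift (derivedSeries (FreeGroup (Fin n)) 2) (magnusFree n)
    (derivedSeries_two_map_eq_one (magnusFree n) (magnusFree_mem_lowerTriv n))

/-- The Laurent monomial `s₁^{j₁} ⋯ sₙ^{jₙ}` with exponent vector `j`. -/
noncomputable def sMonomial (n : ℕ) (j : Fin n →₀ ℤ) : LaurentRing n :=
  AddMonoidAlgebra.single j 1



/-! ### Faithfulness -/

section FaithfulProof

open Multiplicative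
open scoped commutatorElement

variable (n : ℕ)

lemma sMonomial_add (a b : Fin n →₀ ℤ) :
    sMonomial n (a + b) = sMonomial n a * sMonomial n b := by
  rw [sMonomial, sMonomial, sMonomial, AddMonoidAlgebra.single_mul_single, one_mul]

lemma sMonomial_zero : sMonomial n 0 = 1 := by
  rw [sMonomial, AddMonoidAlgebra.one_def]

lemma sMonomial_mul_neg (a : Fin n →₀ ℤ) : sMonomial n a * sMonomial n (-a) = 1 := by
  rw [← sMonomial_add, add_neg_cancel, sMonomial_zero]

/-- The wreath-type group `ℤⁿ ⋉ ℤ[ℤⁿ]ⁿ` through which the Magnus representation factors. -/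
@[ext] structure MW (N : ℕ) : Type where
  a : Fin N →₀ ℤ
  f : Fin N → LaurentRing N

noncomputable instance : Group (MW n) where
  mul x y := ⟨x.a + y.a, fun j => x.f j + sMonomial n x.a * y.f j⟩
  one := ⟨0, fun _ => 0⟩
  inv x := ⟨-x.a, fun j => -(sMonomial n (-x.a) * x.f j)⟩
  mul_assoc x y z := by
    refine MW.ext (add_assoc _ _ _) ?_
    funext j
    show (x.f j + sMonomial n x.a * y.f j) + sMonomial n (x.a + y.a) * z.f j
        = x.f j + sMonomial n x.a * (y.f j + sMonomial n y.a * z.f j)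
    rw [sMonomial_add]; ring
  one_mul x := by
    refine MW.ext (zero_add _) ?_
    funext j
    show (0 : LaurentRing n) + sMonomial n 0 * x.f j = x.f j
    rw [sMonomial_zero]; ring
  mul_one x := by
    refine MW.ext (add_zero _) ?_
    funext j
    show x.f j + sMonomial n x.a * 0 = x.f j
    ring
  inv_mul_cancel x := by
    refine MW.ext (neg_add_cancel _) ?_
    funext j
    show -(sMonomial n (-x.a) * x.f j) + sMonomial n (-x.a) * x.f j = 0
    ring

noncomputable def nu : FreeGroup (Fin n) →* MW n :=
  FreeGroup.lift fun i => ⟨Finsupp.single i 1, Pi.single i 1⟩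

lemma nu_of (i : Fin n) :
    nu n (FreeGroup.of i) = ⟨Finsupp.single i 1, Pi.single i 1⟩ :=
  FreeGroup.lift_apply_of

lemma MW.mul_a (x y : MW n) : (x * y).a = x.a + y.a := rfl

lemma MW.mul_f (x y : MW n) (j : Fin n) :
    (x * y).f j = x.f j + sMonomial n x.a * y.f j := rfl

lemma MW.inv_a (x : MW n) : x⁻¹.a = -x.a := rfl

lemma MW.inv_f (x : MW n) (j : Fin n) :
    x⁻¹.f j = -(sMonomial n (-x.a) * x.f j) := rfl

lemma MW.one_a : (1 : MW n).a = 0 := rfl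

lemma MW.one_f (j : Fin n) : (1 : MW n).f j = 0 := rfl

lemma MW.mk_a (a : Fin n →₀ ℤ) (f : Fin n → LaurentRing n) : (MW.mk a f).a = a := rfl

lemma MW.mk_f (a : Fin n →₀ ℤ) (f : Fin n → LaurentRing n) (j : Fin n) :
    (MW.mk a f).f j = f j := rfl

def projA : MW n →* Multiplicative (Fin n →₀ ℤ) where
  toFun x := Multiplicative.ofAdd x.a
  map_one' := rfl
  map_mul' _ _ := rfl

noncomputable def abHom : FreeGroup (Fin n) →* Multiplicative (Fin n →₀ ℤ) :=
  (projA n).comp (nu n)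

lemma abHom_apply (w : FreeGroup (Fin n)) :
    abHom n w = Multiplicative.ofAdd ((nu n w).a) := rfl

lemma abHom_of (i : Fin n) :
    abHom n (FreeGroup.of i) = Multiplicative.ofAdd (Finsupp.single i 1) := by
  rw [abHom_apply, nu_of]

/-- The linear polynomial `∑ f j • X j`. -/
noncomputable def polyOf (f : Fin n → LaurentRing n) : MagnusRing n :=
  ∑ j, C (f j) * X j

lemma polyOf_add (f g : Fin n → LaurentRing n) :
    polyOf n (f + g) = polyOf n f + polyOf n g := by
  rw [polyOf, polyOf, polyOf, ← Finset.sum_add_distrib]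
  refine Finset.sum_congr rfl fun j _ => ?_
  rw [Pi.add_apply, map_add]; ring

lemma polyOf_smulfun (r : LaurentRing n) (g : Fin n → LaurentRing n) :
    polyOf n (fun j => r * g j) = C r * polyOf n g := by
  rw [polyOf, polyOf, Finset.mul_sum]
  refine Finset.sum_congr rfl fun j _ => ?_
  rw [map_mul]; ring

lemma polyOf_zero : polyOf n 0 = 0 := by
  rw [polyOf]
  refine Finset.sum_eq_zero fun j _ => ?_
  show (C ((0 : Fin n → LaurentRing n) j) : MagnusRing n) * X j = 0
  rw [Pi.zero_apply, map_zero, zero_mul]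

lemma polyOf_single (i : Fin n) (r : LaurentRing n) :
    polyOf n (Pi.single i r) = C r * X i := by
  rw [polyOf, Finset.sum_eq_single i]
  · rw [Pi.single_eq_same]
  · intro j _ hj
    rw [Pi.single_eq_of_ne hj, map_zero, zero_mul]
  · exact fun h => absurd (Finset.mem_univ i) h

lemma coeff_polyOf (f : Fin n → LaurentRing n) (i : Fin n) :
    MvPolynomial.coeff (Finsupp.single i 1) (polyOf n f) = f i := by
  rw [polyOf, MvPolynomial.coeff_sum, Finset.sum_eq_single i]
  · rw [MvPolynomial.coeff_C_mul, MvPolynomial.coeff_X', if_pos rfl, mul_one]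
  · intro j _ hj
    rw [MvPolynomial.coeff_C_mul, MvPolynomial.coeff_X', if_neg, mul_zero]
    intro h
    exact hj (Finsupp.single_left_injective one_ne_zero h)
  · exact fun h => absurd (Finset.mem_univ i) h

noncomputable def theta : MW n →* (Matrix (Fin 2) (Fin 2) (MagnusRing n))ˣ where
  toFun x :=
    { val := !![C (sMonomial n x.a), polyOf n x.f; 0, 1]
      inv := !![C (sMonomial n (-x.a)), -(C (sMonomial n (-x.a))) * polyOf n x.f; 0, 1]
      val_inv := by
        have h : (C (sMonomial n x.a) * C (sMonomial n (-x.a)) : MagnusRing n) = 1 := by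
          rw [← map_mul, sMonomial_mul_neg, map_one]
        rw [Matrix.mul_fin_two, Matrix.one_fin_two]
        have e00 : (C (sMonomial n x.a) * C (sMonomial n (-x.a)) + polyOf n x.f * 0 :
            MagnusRing n) = 1 := by linear_combination h
        have e01 : (C (sMonomial n x.a) * (-(C (sMonomial n (-x.a))) * polyOf n x.f)
            + polyOf n x.f * 1 : MagnusRing n) = 0 := by
          linear_combination (-(polyOf n x.f) : MagnusRing n) * h
        rw [e00, e01]
        norm_num
      inv_val := by
        have h : (C (sMonomial n (-x.a)) * C (sMonomial n x.a) : MagnusRing n) = 1 := by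
          rw [← map_mul, mul_comm, sMonomial_mul_neg, map_one]
        rw [Matrix.mul_fin_two, Matrix.one_fin_two]
        have e00 : (C (sMonomial n (-x.a)) * C (sMonomial n x.a)
            + -(C (sMonomial n (-x.a))) * polyOf n x.f * 0 : MagnusRing n) = 1 := by
          linear_combination h
        have e01 : (C (sMonomial n (-x.a)) * polyOf n x.f
            + -(C (sMonomial n (-x.a))) * polyOf n x.f * 1 : MagnusRing n) = 0 := by ring
        rw [e00, e01]
        norm_num }
  map_one' := by
    apply Units.ext
    show !![C (sMonomial n (1 : MW n).a), polyOf n (1 : MW n).f; 0, 1] = 1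
    rw [show (1 : MW n).a = 0 from rfl, show (1 : MW n).f = 0 from rfl,
      polyOf_zero, sMonomial_zero, map_one]
    exact Matrix.one_fin_two.symm
  map_mul' x y := by
    apply Units.ext
    show !![C (sMonomial n (x * y).a), polyOf n ((x * y).f); 0, 1]
        = !![C (sMonomial n x.a), polyOf n x.f; 0, 1]
          * !![C (sMonomial n y.a), polyOf n y.f; 0, 1]
    rw [Matrix.mul_fin_two]
    have e00 : (C (sMonomial n x.a) * C (sMonomial n y.a) + polyOf n x.f * 0 :
        MagnusRing n) = C (sMonomial n ((x * y).a)) := by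
      rw [show (x * y).a = x.a + y.a from rfl, sMonomial_add, map_mul]; ring
    have e01 : (C (sMonomial n x.a) * polyOf n y.f + polyOf n x.f * 1 : MagnusRing n)
        = polyOf n ((x * y).f) := by
      rw [show (x * y).f = x.f + fun j => sMonomial n x.a * y.f j from rfl,
        polyOf_add, polyOf_smulfun]
      ring
    rw [e00, e01]
    norm_num

lemma theta_comp_nu (w : FreeGroup (Fin n)) : theta n (nu n w) = magnusFree n w := by
  have h : (theta n).comp (nu n) = magnusFree n := by
    refine FreeGroup.ext_hom _ _ fun i => ?_
    rw [MonoidHom.comp_apply, nu_of, magnusFree, FreeGroup.lift_apply_of]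
    apply Units.ext
    show !![C (sMonomial n (Finsupp.single i 1)), polyOf n (Pi.single i 1); 0, 1]
        = (magnusUnit n i).val
    rw [polyOf_single, map_one, one_mul]
    rfl
  exact DFunLike.congr_fun h w

lemma theta_eq_one {x : MW n} (h : theta n x = 1) : x = 1 := by
  have hv : (!![C (sMonomial n x.a), polyOf n x.f; 0, 1] : Matrix (Fin 2) (Fin 2) (MagnusRing n))
      = 1 := congrArg Units.val h
  have h00 : (C (sMonomial n x.a) : MagnusRing n) = 1 := by
    have := congrFun (congrFun hv 0) 0
    simpa using this
  have h01 : polyOf n x.f = 0 := by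
    have := congrFun (congrFun hv 0) 1
    simpa using this
  have ha : x.a = 0 := by
    have h1 : sMonomial n x.a = sMonomial n 0 := by
      apply MvPolynomial.C_injective
      rw [h00, sMonomial_zero, map_one]
    exact AddMonoidAlgebra.single_left_injective one_ne_zero h1
  have hf : x.f = 0 := by
    funext i
    have h2 := coeff_polyOf n x.f i
    rw [h01] at h2
    simpa using h2.symm
  exact MW.ext ha hf

lemma nu_der2 {z : FreeGroup (Fin n)} (hz : z ∈ derivedSeries (FreeGroup (Fin n)) 2) :
    nu n z = 1 := by
  apply theta_eq_one
  rw [theta_comp_nu]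
  exact derivedSeries_two_map_eq_one (magnusFree n) (magnusFree_mem_lowerTriv n) z hz

lemma abHom_eq_one_of_der1 {w : FreeGroup (Fin n)}
    (hw : w ∈ derivedSeries (FreeGroup (Fin n)) 1) : abHom n w = 1 := by
  rw [derivedSeries_one] at hw
  exact Abelianization.commutator_subset_ker (abHom n) hw

noncomputable def retA : Multiplicative (Fin n →₀ ℤ) →* Abelianization (FreeGroup (Fin n)) :=
  AddMonoidHom.toMultiplicativeLeft
    (Finsupp.liftAddHom fun i =>
      zmultiplesHom _ (Additive.ofMul (Abelianization.of (FreeGroup.of i))))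

lemma retA_abHom (w : FreeGroup (Fin n)) : retA n (abHom n w) = Abelianization.of w := by
  have h : (retA n).comp (abHom n) = Abelianization.of := by
    refine FreeGroup.ext_hom _ _ fun i => ?_
    rw [MonoidHom.comp_apply, abHom_of]
    show ((Finsupp.liftAddHom fun i =>
        zmultiplesHom _ (Additive.ofMul (Abelianization.of (FreeGroup.of i))))
      (Finsupp.single i 1)).toMul = Abelianization.of (FreeGroup.of i)
    rw [Finsupp.liftAddHom_apply_single, zmultiplesHom_apply, one_zsmul]
    rfl
  exact DFunLike.congr_fun h w

lemma mem_der1 {w : FreeGroup (Fin n)} (h : abHom n w = 1) :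
    w ∈ derivedSeries (FreeGroup (Fin n)) 1 := by
  rw [derivedSeries_one]
  have h1 : Abelianization.of w = 1 := by rw [← retA_abHom, h, map_one]
  exact (QuotientGroup.eq_one_iff w).mp h1

lemma nu_a_of_der1 {w : FreeGroup (Fin n)}
    (hw : w ∈ derivedSeries (FreeGroup (Fin n)) 1) : (nu n w).a = 0 := by
  have h := abHom_eq_one_of_der1 n hw
  calc (nu n w).a = (abHom n w).toAdd := rfl
    _ = (1 : Multiplicative (Fin n →₀ ℤ)).toAdd := by rw [h]
    _ = 0 := rfl

noncomputable def mkQ : FreeGroup (Fin n) →* FreeMetabelian n :=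
  QuotientGroup.mk' (derivedSeries (FreeGroup (Fin n)) 2)

/-- The image of the commutator subgroup in the free metabelian group. -/
noncomputable def Kgrp : Subgroup (FreeMetabelian n) :=
  Subgroup.map (mkQ n) (derivedSeries (FreeGroup (Fin n)) 1)

lemma comm_mem_der2 {u v : FreeGroup (Fin n)}
    (hu : u ∈ derivedSeries (FreeGroup (Fin n)) 1)
    (hv : v ∈ derivedSeries (FreeGroup (Fin n)) 1) :
    ⁅u, v⁆ ∈ derivedSeries (FreeGroup (Fin n)) 2 := by
  have h : derivedSeries (FreeGroup (Fin n)) 2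
      = ⁅derivedSeries (FreeGroup (Fin n)) 1, derivedSeries (FreeGroup (Fin n)) 1⁆ :=
    derivedSeries_succ _ 1
  rw [h]
  exact Subgroup.commutator_mem_commutator hu hv

lemma mkQ_eq_of_der2 {u v : FreeGroup (Fin n)}
    (h : u * v⁻¹ ∈ derivedSeries (FreeGroup (Fin n)) 2) : mkQ n u = mkQ n v := by
  have h1 : mkQ n (u * v⁻¹) = 1 := (QuotientGroup.eq_one_iff _).mpr h
  rw [map_mul, map_inv] at h1
  exact mul_inv_eq_one.mp h1

noncomputable instance : CommGroup ↥(Kgrp n) :=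
  { (inferInstance : Group ↥(Kgrp n)) with
    mul_comm := by
      rintro ⟨x, hx⟩ ⟨y, hy⟩
      obtain ⟨u, hu, rfl⟩ := Subgroup.mem_map.mp hx
      obtain ⟨v, hv, rfl⟩ := Subgroup.mem_map.mp hy
      apply Subtype.ext
      show mkQ n u * mkQ n v = mkQ n v * mkQ n u
      rw [← map_mul, ← map_mul]
      apply mkQ_eq_of_der2
      rw [show u * v * (v * u)⁻¹ = ⁅u, v⁆ by group]
      exact comm_mem_der2 n hu hv }

/-- Canonical word representing an exponent vector. -/
noncomputable def Pword (a : Fin n →₀ ℤ) : FreeGroup (Fin n) :=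
  ((List.finRange n).map fun i => FreeGroup.of i ^ (a i)).prod

lemma abHom_Pword (a : Fin n →₀ ℤ) : abHom n (Pword n a) = Multiplicative.ofAdd a := by
  rw [Pword, map_list_prod, List.map_map]
  have h1 : (abHom n) ∘ (fun i => FreeGroup.of i ^ (a i))
      = fun i => Multiplicative.ofAdd (Finsupp.single i (a i)) := by
    funext i
    show abHom n (FreeGroup.of i ^ (a i)) = _
    rw [map_zpow, abHom_of, ← ofAdd_zsmul, Finsupp.smul_single, smul_eq_mul, mul_one]
  rw [h1]
  have h2 : ∀ L : List (Fin n),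
      ((L.map fun i => Multiplicative.ofAdd (Finsupp.single i (a i))).prod)
        = Multiplicative.ofAdd (L.map fun i => Finsupp.single i (a i)).sum := by
    intro L
    induction L with
    | nil => rfl
    | cons x xs ih =>
        rw [List.map_cons, List.prod_cons, ih, List.map_cons, List.sum_cons]
        rfl
  rw [h2]
  congr 1
  rw [← Fin.sum_univ_def]
  ext x
  rw [Finsupp.finset_sum_apply]
  simp [Finsupp.single_apply]

/-- Staircase loop words. -/
noncomputable def loopF (a : Fin n →₀ ℤ) (i : Fin n) : FreeGroup (Fin n) :=
  Pword n a * FreeGroup.of i * (Pword n (a + Finsupp.single i 1))⁻¹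

lemma loopF_mem (a : Fin n →₀ ℤ) (i : Fin n) :
    loopF n a i ∈ derivedSeries (FreeGroup (Fin n)) 1 := by
  apply mem_der1
  rw [loopF, map_mul, map_mul, map_inv, abHom_Pword, abHom_of, abHom_Pword, ← ofAdd_add]
  exact mul_inv_cancel _

noncomputable def loopK (a : Fin n →₀ ℤ) (i : Fin n) : ↥(Kgrp n) :=
  ⟨mkQ n (loopF n a i), Subgroup.mem_map_of_mem _ (loopF_mem n a i)⟩

noncomputable def phiAux (i : Fin n) : LaurentRing n →+ Additive ↥(Kgrp n) :=
  (Finsupp.liftAddHom fun a => zmultiplesHom _ (Additive.ofMul (loopK n a i))).comp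
    AddMonoidAlgebra.coeffAddEquiv.toAddMonoidHom

lemma phiAux_single (i : Fin n) (a : Fin n →₀ ℤ) (m : ℤ) :
    phiAux n i (AddMonoidAlgebra.single a m) = m • Additive.ofMul (loopK n a i) := by
  rw [phiAux]
  exact Finsupp.liftAddHom_apply_single _ a m

lemma phiAux_sMonomial (i : Fin n) (a : Fin n →₀ ℤ) :
    phiAux n i (sMonomial n a) = Additive.ofMul (loopK n a i) := by
  rw [sMonomial, phiAux_single, one_zsmul]

noncomputable def phi : (Fin n → LaurentRing n) →+ Additive ↥(Kgrp n) where
  toFun f := ∑ i, phiAux n i (f i)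
  map_zero' := by
    show (∑ i, phiAux n i ((0 : Fin n → LaurentRing n) i)) = 0
    simp
  map_add' f g := by
    show (∑ i, phiAux n i ((f + g) i))
        = (∑ i, phiAux n i (f i)) + ∑ i, phiAux n i (g i)
    rw [← Finset.sum_add_distrib]
    refine Finset.sum_congr rfl fun i _ => ?_
    rw [Pi.add_apply, map_add]

lemma phi_apply (f : Fin n → LaurentRing n) : phi n f = ∑ i, phiAux n i (f i) := by
  simp only [phi, AddMonoidHom.coe_mk, ZeroHom.coe_mk]

lemma phi_single (i : Fin n) (r : LaurentRing n) : phi n (Pi.single i r) = phiAux n i r := by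
  rw [phi_apply, Finset.sum_eq_single i]
  · rw [Pi.single_eq_same]
  · intro j _ hj
    rw [Pi.single_eq_of_ne hj, map_zero]
  · exact fun h => absurd (Finset.mem_univ i) h

lemma nu_f_mul_der1 {u : FreeGroup (Fin n)} (v : FreeGroup (Fin n))
    (hu : u ∈ derivedSeries (FreeGroup (Fin n)) 1) :
    (nu n (u * v)).f = (nu n u).f + (nu n v).f := by
  rw [map_mul]
  funext j
  rw [Pi.add_apply, MW.mul_f, nu_a_of_der1 n hu, sMonomial_zero, one_mul]

lemma nu_f_inv_der1 {u : FreeGroup (Fin n)}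
    (hu : u ∈ derivedSeries (FreeGroup (Fin n)) 1) :
    (nu n u⁻¹).f = -(nu n u).f := by
  rw [map_inv]
  funext j
  rw [Pi.neg_apply, MW.inv_f, nu_a_of_der1 n hu, neg_zero, sMonomial_zero, one_mul]

lemma nu_f_conj (g c : FreeGroup (Fin n)) (hc : (nu n c).a = 0) :
    (nu n (g * c * g⁻¹)).f = fun j => sMonomial n (nu n g).a * (nu n c).f j := by
  rw [map_mul, map_mul, map_inv]
  funext j
  rw [MW.mul_f, MW.mul_f, MW.inv_f, MW.mul_a, hc, add_zero]
  have h : sMonomial n (nu n g).a * sMonomial n (-(nu n g).a) = 1 := sMonomial_mul_neg n _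
  linear_combination (-(nu n g).f j) * h

lemma comm_mem_der1 (i j : Fin n) :
    ⁅FreeGroup.of i, FreeGroup.of j⁆ ∈ derivedSeries (FreeGroup (Fin n)) 1 := by
  rw [derivedSeries_one, commutator_def]
  exact Subgroup.commutator_mem_commutator (Subgroup.mem_top _) (Subgroup.mem_top _)

lemma nu_f_comm (i j : Fin n) :
    (nu n ⁅FreeGroup.of i, FreeGroup.of j⁆).f
      = fun k => ((Pi.single i 1 : Fin n → LaurentRing n) k
            + sMonomial n (Finsupp.single i 1) * (Pi.single j 1 : Fin n → LaurentRing n) k)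
          - (sMonomial n (Finsupp.single j 1) * (Pi.single i 1 : Fin n → LaurentRing n) k
            + (Pi.single j 1 : Fin n → LaurentRing n) k) := by
  rw [commutatorElement_def, map_mul, map_mul, map_mul, map_inv, map_inv, nu_of, nu_of]
  funext k
  simp only [MW.mul_f, MW.inv_f, MW.mul_a, MW.inv_a, MW.mk_a, MW.mk_f]
  have h1 : sMonomial n (Finsupp.single i 1 + Finsupp.single j 1)
      * sMonomial n (-(Finsupp.single i (1 : ℤ))) = sMonomial n (Finsupp.single j 1) := by
    rw [← sMonomial_add]
    congr 1
    abel
  have h2 : sMonomial n (Finsupp.single i 1 + Finsupp.single j 1 + -(Finsupp.single i 1))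
      * sMonomial n (-(Finsupp.single j (1 : ℤ))) = 1 := by
    rw [← sMonomial_add]
    have h3 : Finsupp.single i (1 : ℤ) + Finsupp.single j 1 + -(Finsupp.single i 1)
        + -(Finsupp.single j 1) = 0 := by abel
    rw [h3, sMonomial_zero]
  linear_combination (-((Pi.single i 1 : Fin n → LaurentRing n) k)) * h1
    + (-((Pi.single j 1 : Fin n → LaurentRing n) k)) * h2

lemma smul_nu_f_comm (a : Fin n →₀ ℤ) (i j : Fin n) :
    (fun k => sMonomial n a * (nu n ⁅FreeGroup.of i, FreeGroup.of j⁆).f k)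
      = (Pi.single i (sMonomial n a) : Fin n → LaurentRing n)
        + (Pi.single j (sMonomial n (a + Finsupp.single i 1)) : Fin n → LaurentRing n)
        - (Pi.single i (sMonomial n (a + Finsupp.single j 1)) : Fin n → LaurentRing n)
        - (Pi.single j (sMonomial n a) : Fin n → LaurentRing n) := by
  rw [nu_f_comm]
  funext k
  simp only [Pi.sub_apply, Pi.add_apply, Pi.single_apply]
  rw [sMonomial_add, sMonomial_add]
  split_ifs <;> ring

lemma word_identity (a : Fin n →₀ ℤ) (i j : Fin n) :
    loopF n a i * loopF n (a + Finsupp.single i 1) j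
        * (loopF n (a + Finsupp.single j 1) i)⁻¹ * (loopF n a j)⁻¹
      = Pword n a * ⁅FreeGroup.of i, FreeGroup.of j⁆ * (Pword n a)⁻¹ := by
  have h : a + Finsupp.single j 1 + Finsupp.single i 1
      = a + Finsupp.single i 1 + Finsupp.single j 1 := by abel
  rw [loopF, loopF, loopF, loopF, h, commutatorElement_def]
  group

lemma base_case (g : FreeGroup (Fin n)) (i j : Fin n) :
    (Additive.toMul (phi n ((nu n (g * ⁅FreeGroup.of i, FreeGroup.of j⁆ * g⁻¹)).f)) :
        ↥(Kgrp n)).1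
      = mkQ n (g * ⁅FreeGroup.of i, FreeGroup.of j⁆ * g⁻¹) := by
  have hc1 : ⁅FreeGroup.of i, FreeGroup.of j⁆ ∈ derivedSeries (FreeGroup (Fin n)) 1 :=
    comm_mem_der1 n i j
  have hca : (nu n ⁅FreeGroup.of i, FreeGroup.of j⁆).a = 0 := nu_a_of_der1 n hc1
  set a : Fin n →₀ ℤ := (nu n g).a with ha
  have habg : abHom n g = Multiplicative.ofAdd a := rfl
  have hu : g * (Pword n a)⁻¹ ∈ derivedSeries (FreeGroup (Fin n)) 1 := by
    apply mem_der1
    rw [map_mul, map_inv, abHom_Pword, habg]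
    exact mul_inv_cancel _
  have hv : Pword n a * ⁅FreeGroup.of i, FreeGroup.of j⁆ * (Pword n a)⁻¹
      ∈ derivedSeries (FreeGroup (Fin n)) 1 :=
    (derivedSeries_normal _ _).conj_mem _ hc1 _
  have hdiff : (g * ⁅FreeGroup.of i, FreeGroup.of j⁆ * g⁻¹)
      * (Pword n a * ⁅FreeGroup.of i, FreeGroup.of j⁆ * (Pword n a)⁻¹)⁻¹
      ∈ derivedSeries (FreeGroup (Fin n)) 2 := by
    rw [show (g * ⁅FreeGroup.of i, FreeGroup.of j⁆ * g⁻¹)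
        * (Pword n a * ⁅FreeGroup.of i, FreeGroup.of j⁆ * (Pword n a)⁻¹)⁻¹
      = ⁅g * (Pword n a)⁻¹,
          Pword n a * ⁅FreeGroup.of i, FreeGroup.of j⁆ * (Pword n a)⁻¹⁆ by group]
    exact comm_mem_der2 n hu hv
  have hnu : nu n (g * ⁅FreeGroup.of i, FreeGroup.of j⁆ * g⁻¹)
      = nu n (Pword n a * ⁅FreeGroup.of i, FreeGroup.of j⁆ * (Pword n a)⁻¹) := by
    have h1 := nu_der2 n hdiff
    rw [map_mul, map_inv] at h1
    exact mul_inv_eq_one.mp h1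
  have hmk : mkQ n (g * ⁅FreeGroup.of i, FreeGroup.of j⁆ * g⁻¹)
      = mkQ n (Pword n a * ⁅FreeGroup.of i, FreeGroup.of j⁆ * (Pword n a)⁻¹) :=
    mkQ_eq_of_der2 n hdiff
  rw [hnu, hmk]
  have habP : (nu n (Pword n a)).a = a := by
    have h := abHom_Pword n a
    calc (nu n (Pword n a)).a = (abHom n (Pword n a)).toAdd := rfl
      _ = (Multiplicative.ofAdd a).toAdd := by rw [h]
      _ = a := rfl
  rw [nu_f_conj n _ _ hca, habP, smul_nu_f_comm, map_sub (phi n), map_sub (phi n),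
    map_add (phi n), phi_single, phi_single, phi_single, phi_single,
    phiAux_sMonomial, phiAux_sMonomial, phiAux_sMonomial, phiAux_sMonomial]
  rw [sub_eq_add_neg, sub_eq_add_neg, toMul_add, toMul_add, toMul_add, toMul_neg, toMul_neg,
    toMul_ofMul, toMul_ofMul, toMul_ofMul, toMul_ofMul]
  show mkQ n (loopF n a i) * mkQ n (loopF n (a + Finsupp.single i 1) j)
      * (mkQ n (loopF n (a + Finsupp.single j 1) i))⁻¹ * (mkQ n (loopF n a j))⁻¹
      = mkQ n (Pword n a * ⁅FreeGroup.of i, FreeGroup.of j⁆ * (Pword n a)⁻¹)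
  rw [← map_inv, ← map_inv, ← map_mul, ← map_mul, ← map_mul, word_identity]

lemma der1_le_ncl : derivedSeries (FreeGroup (Fin n)) 1
    ≤ Subgroup.normalClosure
        {x : FreeGroup (Fin n) | ∃ i j : Fin n, x = ⁅FreeGroup.of i, FreeGroup.of j⁆} := by
  rw [derivedSeries_one, commutator_def, Subgroup.commutator_le]
  intro g1 _ g2 _
  have hcomm : ∀ u v : FreeGroup (Fin n),
      Commute ((QuotientGroup.mk' (Subgroup.normalClosure
        {x : FreeGroup (Fin n) | ∃ i j : Fin n, x = ⁅FreeGroup.of i, FreeGroup.of j⁆})) u)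
        ((QuotientGroup.mk' _) v) := by
    intro u v
    have hu : u ∈ Subgroup.closure (Set.range (FreeGroup.of : Fin n → FreeGroup (Fin n))) := by
      rw [FreeGroup.closure_range_of]; trivial
    have hv : v ∈ Subgroup.closure (Set.range (FreeGroup.of : Fin n → FreeGroup (Fin n))) := by
      rw [FreeGroup.closure_range_of]; trivial
    refine Subgroup.closure_induction₂ ?_ ?_ ?_ ?_ ?_ ?_ ?_ hu hv
    · rintro x y ⟨i, rfl⟩ ⟨j, rfl⟩
      have h1 : ⁅FreeGroup.of i, FreeGroup.of j⁆ ∈ Subgroup.normalClosure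
          {x : FreeGroup (Fin n) | ∃ i j : Fin n, x = ⁅FreeGroup.of i, FreeGroup.of j⁆} :=
        Subgroup.subset_normalClosure ⟨i, j, rfl⟩
      have h2 : (QuotientGroup.mk' _) ⁅FreeGroup.of i, FreeGroup.of j⁆ = 1 :=
        (QuotientGroup.eq_one_iff _).mpr h1
      rw [map_commutatorElement] at h2
      exact commutatorElement_eq_one_iff_commute.mp h2
    · intro x _; rw [map_one]; exact Commute.one_left _
    · intro x _; rw [map_one]; exact Commute.one_right _
    · intro x y z _ _ _ h1 h2; rw [map_mul]; exact h1.mul_left h2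
    · intro y z x _ _ _ h1 h2; rw [map_mul]; exact h1.mul_right h2
    · intro x y _ _ h1; rw [map_inv]; exact h1.inv_left
    · intro x y _ _ h1; rw [map_inv]; exact h1.inv_right
  have h := hcomm g1 g2
  have h2 : (QuotientGroup.mk' (Subgroup.normalClosure
      {x : FreeGroup (Fin n) | ∃ i j : Fin n, x = ⁅FreeGroup.of i, FreeGroup.of j⁆})) ⁅g1, g2⁆ = 1 := by
    rw [map_commutatorElement]
    exact commutatorElement_eq_one_iff_commute.mpr h
  exact (QuotientGroup.eq_one_iff _).mp h2

lemma key (w : FreeGroup (Fin n)) (hw : w ∈ derivedSeries (FreeGroup (Fin n)) 1) :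
    (Additive.toMul (phi n ((nu n w).f)) : ↥(Kgrp n)).1 = mkQ n w := by
  have hw' : w ∈ Subgroup.closure (Group.conjugatesOfSet
      {x : FreeGroup (Fin n) | ∃ i j : Fin n, x = ⁅FreeGroup.of i, FreeGroup.of j⁆}) :=
    der1_le_ncl n hw
  clear hw
  have main : w ∈ derivedSeries (FreeGroup (Fin n)) 1 ∧
      (Additive.toMul (phi n ((nu n w).f)) : ↥(Kgrp n)).1 = mkQ n w := by
    induction hw' using Subgroup.closure_induction with
    | mem x hx =>
        obtain ⟨c, ⟨i, j, rfl⟩, hconj⟩ := Group.mem_conjugatesOfSet_iff.mp hx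
        obtain ⟨g, rfl⟩ := isConj_iff.mp hconj
        refine ⟨(derivedSeries_normal _ _).conj_mem _ (comm_mem_der1 n i j) g, ?_⟩
        exact base_case n g i j
    | one =>
        refine ⟨one_mem _, ?_⟩
        rw [map_one]
        show (Additive.toMul (phi n (0 : Fin n → LaurentRing n)) : ↥(Kgrp n)).1 = mkQ n 1
        rw [map_zero, map_one]
        rfl
    | mul x y hx hy ihx ihy =>
        refine ⟨mul_mem ihx.1 ihy.1, ?_⟩
        rw [nu_f_mul_der1 n y ihx.1, map_add, toMul_add]
        show (Additive.toMul (phi n ((nu n x).f)) : ↥(Kgrp n)).1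
            * (Additive.toMul (phi n ((nu n y).f)) : ↥(Kgrp n)).1 = _
        rw [ihx.2, ihy.2, map_mul]
    | inv x hx ihx =>
        refine ⟨inv_mem ihx.1, ?_⟩
        rw [nu_f_inv_der1 n ihx.1, map_neg, toMul_neg]
        show ((Additive.toMul (phi n ((nu n x).f)) : ↥(Kgrp n)))⁻¹.1 = _
        rw [map_inv]
        show ((Additive.toMul (phi n ((nu n x).f)) : ↥(Kgrp n))).1⁻¹ = _
        rw [ihx.2]
  exact main.2

end FaithfulProof

/-- The Magnus representation of the free metabelian group is faithful. -/
theorem magnus_representation_faithful (n : ℕ) :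
    Function.Injective (Magnus n) := by
  rw [injective_iff_map_eq_one]
  intro q hq
  obtain ⟨w, rfl⟩ := QuotientGroup.mk'_surjective (derivedSeries (FreeGroup (Fin n)) 2) q
  have hmf : magnusFree n w = 1 := by
    have h : Magnus n ((QuotientGroup.mk' (derivedSeries (FreeGroup (Fin n)) 2)) w)
        = magnusFree n w := QuotientGroup.lift_mk' _ _ w
    rw [← h]
    exact hq
  have hnu1 : nu n w = 1 := by
    apply theta_eq_one
    rw [theta_comp_nu]
    exact hmf
  have hab : abHom n w = 1 := by
    show projA n (nu n w) = 1
    rw [hnu1, map_one]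
  have hw1 : w ∈ derivedSeries (FreeGroup (Fin n)) 1 := mem_der1 n hab
  have hk := key n w hw1
  have h1 : (mkQ n) w = 1 := by
    calc (mkQ n) w = (Additive.toMul (phi n ((nu n w).f)) : ↥(Kgrp n)).1 := hk.symm
      _ = 1 := by
          rw [hnu1]
          show (Additive.toMul (phi n (0 : Fin n → LaurentRing n)) : ↥(Kgrp n)).1 = 1
          rw [map_zero]
          rfl
  exact h1
end

section
/- Let α be an endomorphism of the free metabelian group M_n that induces the identity on the abelianization of M_n (an IA-endomorphism). Then there exist elements α_{i,j} (1 ≤ i,j ≤ n) of the Laurent polynomial ring ℤ[s_1^{±1},…,s_n^{±1}] such that for all g ∈ M_n, φ(α(g)) = ᾱ(φ(g)), where ᾱ is the ring endomorphism of R = ℤ[s_1^{±1},…,s_n^{±1}, t_1,…,t_n] defined by ᾱ(t_i) = Σ_j α_{i,j} t_j and ᾱ(s_i) = s_i, applied entrywise to the matrix φ(g). -/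
open MvPolynomial

/-- The ring endomorphism `ᾱ` of `R = ℤ[s^{±1}, t]` fixing the Laurent coefficients
(hence each `sᵢ`) and sending `tᵢ` to `Σⱼ a i j • tⱼ`. -/
noncomputable def barHom (n : ℕ) (a : Fin n → Fin n → LaurentRing n) :
    MagnusRing n →+* MagnusRing n :=
  (MvPolynomial.aeval (R := LaurentRing n) fun i : Fin n =>
    ∑ j : Fin n, C (a i j) * X j : MagnusRing n →ₐ[LaurentRing n] MagnusRing n).toRingHom


lemma Magnus_mk (n : ℕ) (w : FreeGroup (Fin n)) :
    Magnus n (QuotientGroup.mk w) = magnusFree n w := rfl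

lemma Magnus_mem_lowerTriv (n : ℕ) (g : FreeMetabelian n) :
    Magnus n g ∈ lowerTriv (MagnusRing n) := by
  refine QuotientGroup.induction_on g (fun w => ?_)
  rw [Magnus_mk]
  exact magnusFree_mem_lowerTriv n w

lemma Magnus_commutator_mem_upperUni (n : ℕ) {g : FreeMetabelian n}
    (hg : g ∈ commutator (FreeMetabelian n)) :
    Magnus n g ∈ upperUni (MagnusRing n) := by
  have hle : commutator (FreeMetabelian n) ≤ (upperUni (MagnusRing n)).comap (Magnus n) := by
    rw [commutator_def, Subgroup.commutator_le]
    intro x _ y _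
    simp only [Subgroup.mem_comap, map_commutatorElement]
    exact commutator_mem_upperUni (Magnus_mem_lowerTriv n x) (Magnus_mem_lowerTriv n y)
  exact hle hg

lemma Magnus_entry00_eq (n : ℕ) (α : FreeMetabelian n →* FreeMetabelian n)
    (hIA : ∀ g : FreeMetabelian n, Abelianization.of (α g) = Abelianization.of g)
    (g : FreeMetabelian n) :
    (Magnus n (α g)).val 0 0 = (Magnus n g).val 0 0 := by
  have hmem : α g * g⁻¹ ∈ commutator (FreeMetabelian n) := by
    have h1 : Abelianization.of (α g * g⁻¹) = 1 := by
      rw [map_mul, map_inv, hIA, mul_inv_cancel]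
    exact (QuotientGroup.eq_one_iff _).mp h1
  have h1 : Magnus n (α g * g⁻¹) ∈ upperUni (MagnusRing n) :=
    Magnus_commutator_mem_upperUni n hmem
  have h00 := (mem_upperUni.mp h1).1
  rw [map_mul, map_inv] at h00
  have hmul := lowerTriv_mul_apply_zero_zero (A := Magnus n (α g))
    ((lowerTriv (MagnusRing n)).inv_mem (Magnus_mem_lowerTriv n g))
  rw [hmul] at h00
  have h2 := lowerTriv_inv_zero_zero (Magnus_mem_lowerTriv n g)
  calc (Magnus n (α g)).val 0 0
      = (Magnus n (α g)).val 0 0 * ((Magnus n g).val 0 0 * ((Magnus n g)⁻¹).val 0 0) := by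
        rw [h2, mul_one]
    _ = (Magnus n g).val 0 0 * ((Magnus n (α g)).val 0 0 * ((Magnus n g)⁻¹).val 0 0) := by ring
    _ = (Magnus n g).val 0 0 := by rw [h00, mul_one]

/-- The subgroup of matrices `[[C c, linear in X],[0,1]]` with `c` a unit. -/
noncomputable def magnusShape (n : ℕ) : Subgroup (Matrix (Fin 2) (Fin 2) (MagnusRing n))ˣ where
  carrier := {A | A.val 1 0 = 0 ∧ A.val 1 1 = 1 ∧
    (∃ c : (LaurentRing n)ˣ, A.val 0 0 = C (c : LaurentRing n)) ∧
    A.val 0 1 ∈ Submodule.span (LaurentRing n) (Set.range (X : Fin n → MagnusRing n))}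
  one_mem' := by
    refine ⟨by simp, by simp, ⟨1, by simp⟩, ?_⟩
    have h : ((1 : (Matrix (Fin 2) (Fin 2) (MagnusRing n))ˣ)).val 0 1 = 0 := by simp
    rw [h]; exact Submodule.zero_mem _
  mul_mem' := by
    rintro A B ⟨ha0, ha1, ⟨cA, hA⟩, hAs⟩ ⟨hb0, hb1, ⟨cB, hB⟩, hBs⟩
    refine ⟨?_, ?_, ⟨cA * cB, ?_⟩, ?_⟩
    · simp [Units.val_mul, Matrix.mul_apply, Fin.sum_univ_two, ha0, ha1, hb0, hb1]
    · simp [Units.val_mul, Matrix.mul_apply, Fin.sum_univ_two, ha0, ha1, hb0, hb1]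
    · rw [Units.val_mul, Matrix.mul_apply, Fin.sum_univ_two, hb0, mul_zero, add_zero, hA, hB,
        ← map_mul, Units.val_mul]
    · have h : (A * B).val 0 1 = C (cA : LaurentRing n) * B.val 0 1 + A.val 0 1 := by
        simp [Units.val_mul, Matrix.mul_apply, Fin.sum_univ_two, hA, hb1]
      rw [h, ← smul_eq_C_mul]
      exact Submodule.add_mem _ (Submodule.smul_mem _ _ hBs) hAs
  inv_mem' := by
    rintro A ⟨ha0, ha1, ⟨cA, hA⟩, hAs⟩
    have hmemA : A ∈ lowerTriv (MagnusRing n) := ⟨ha0, ha1⟩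
    obtain ⟨hi0, hi1⟩ := mem_lowerTriv.mp ((lowerTriv (MagnusRing n)).inv_mem hmemA)
    have h00 : A.val 0 0 * (A⁻¹).val 0 0 = 1 := lowerTriv_inv_zero_zero hmemA
    rw [hA] at h00
    have hc : C ((cA⁻¹ : (LaurentRing n)ˣ) : LaurentRing n) * C (cA : LaurentRing n)
        = (1 : MagnusRing n) := by
      rw [← map_mul, Units.inv_mul, map_one]
    have hinv00 : (A⁻¹).val 0 0 = C ((cA⁻¹ : (LaurentRing n)ˣ) : LaurentRing n) := by
      calc (A⁻¹).val 0 0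
          = (C (↑cA⁻¹ : LaurentRing n) * C (cA : LaurentRing n)) * (A⁻¹).val 0 0 := by
            rw [hc, one_mul]
        _ = C (↑cA⁻¹ : LaurentRing n) * (C (cA : LaurentRing n) * (A⁻¹).val 0 0) := by ring
        _ = C (↑cA⁻¹ : LaurentRing n) := by rw [h00, mul_one]
    have key : C (cA : LaurentRing n) * (A⁻¹).val 0 1 + A.val 0 1 = 0 := by
      have h : ((A * A⁻¹).val) 0 1 = (1 : Matrix (Fin 2) (Fin 2) (MagnusRing n)) 0 1 := by
        rw [mul_inv_cancel]; rfl
      rw [Units.val_mul, Matrix.mul_apply, Fin.sum_univ_two,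
        Matrix.one_apply_ne (by decide)] at h
      rwa [hi1, mul_one, hA] at h
    have hinv01 : (A⁻¹).val 0 1 = -(C (↑cA⁻¹ : LaurentRing n) * A.val 0 1) := by
      linear_combination C (↑cA⁻¹ : LaurentRing n) * key - (A⁻¹).val 0 1 * hc
    refine ⟨hi0, hi1, ⟨cA⁻¹, hinv00⟩, ?_⟩
    rw [hinv01, ← smul_eq_C_mul]
    exact Submodule.neg_mem _ (Submodule.smul_mem _ _ hAs)

noncomputable def sUnit (n : ℕ) (i : Fin n) : (LaurentRing n)ˣ where
  val := sVar n i
  inv := sVarInv n i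
  val_inv := sVar_mul_sVarInv n i
  inv_val := by rw [mul_comm]; exact sVar_mul_sVarInv n i

lemma magnusFree_mem_shape (n : ℕ) (g : FreeGroup (Fin n)) :
    magnusFree n g ∈ magnusShape n := by
  refine FreeGroup.range_lift_le (s := magnusShape n) ?_ ⟨g, rfl⟩
  rintro A ⟨i, rfl⟩
  refine ⟨by simp [magnusUnit], by simp [magnusUnit], ⟨sUnit n i, by simp [magnusUnit, sUnit]⟩, ?_⟩
  have h : (magnusUnit n i).val 0 1 = X i := by simp [magnusUnit]
  rw [h]
  exact Submodule.subset_span ⟨i, rfl⟩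

lemma Magnus_mem_shape (n : ℕ) (g : FreeMetabelian n) : Magnus n g ∈ magnusShape n := by
  refine QuotientGroup.induction_on g (fun w => ?_)
  rw [Magnus_mk]
  exact magnusFree_mem_shape n w

lemma Magnus_gen (n : ℕ) (i : Fin n) : Magnus n (gen n i) = magnusUnit n i := by
  show magnusFree n (FreeGroup.of i) = magnusUnit n i
  exact FreeGroup.lift_apply_of

lemma barHom_C (n : ℕ) (a : Fin n → Fin n → LaurentRing n) (c : LaurentRing n) :
    barHom n a (C c) = C c := by
  simp [barHom, MvPolynomial.algebraMap_eq]

lemma barHom_X (n : ℕ) (a : Fin n → Fin n → LaurentRing n) (i : Fin n) :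
    barHom n a (X i) = ∑ j : Fin n, C (a i j) * X j := by
  simp [barHom]

/-- For every IA-endomorphism `α` of the free metabelian group there are Laurent
polynomials `α_{i,j}` such that `φ (α g) = ᾱ (φ g)` (applied entrywise), where `ᾱ` fixes
the `sᵢ` and sends `tᵢ` to `Σⱼ α_{i,j} tⱼ`. -/
theorem IA_endomorphism_magnus_matrix (n : ℕ) (α : FreeMetabelian n →* FreeMetabelian n)
    (hIA : ∀ g : FreeMetabelian n, Abelianization.of (α g) = Abelianization.of g) :
    ∃ a : Fin n → Fin n → LaurentRing n,
      ∀ g : FreeMetabelian n,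
        (Magnus n (α g) : Matrix (Fin 2) (Fin 2) (MagnusRing n)) =
          (Magnus n g : Matrix (Fin 2) (Fin 2) (MagnusRing n)).map (barHom n a) := by
  classical
  have hshape : ∀ i : Fin n, ∃ c : Fin n → LaurentRing n,
      ∑ j, c j • (X j : MagnusRing n) = (Magnus n (α (gen n i))).val 0 1 := by
    intro i
    exact (Submodule.mem_span_range_iff_exists_fun (LaurentRing n)).mp ((Magnus_mem_shape n (α (gen n i))).2.2.2)
  set a : Fin n → Fin n → LaurentRing n := fun i => Classical.choose (hshape i) with ha
  have hspec : ∀ i : Fin n,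
      ∑ j, a i j • (X j : MagnusRing n) = (Magnus n (α (gen n i))).val 0 1 := fun i =>
    Classical.choose_spec (hshape i)
  refine ⟨a, ?_⟩
  set M : Matrix (Fin 2) (Fin 2) (MagnusRing n) →* Matrix (Fin 2) (Fin 2) (MagnusRing n) :=
    (RingHom.mapMatrix (barHom n a)).toMonoidHom with hM
  set Φ : FreeMetabelian n →* (Matrix (Fin 2) (Fin 2) (MagnusRing n))ˣ :=
    (Units.map M).comp (Magnus n) with hΦ
  set Ψ : FreeMetabelian n →* (Matrix (Fin 2) (Fin 2) (MagnusRing n))ˣ :=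
    (Magnus n).comp α with hΨ
  have hΦval : ∀ g : FreeMetabelian n,
      (Φ g).val = (Magnus n g).val.map (barHom n a) := by
    intro g
    simp [hΦ, hM, Units.coe_map, RingHom.mapMatrix_apply]
  have hgen : ∀ i : Fin n, Ψ (gen n i) = Φ (gen n i) := by
    intro i
    apply Units.ext
    have h00 : (Magnus n (α (gen n i))).val 0 0 = C (sVar n i) := by
      rw [Magnus_entry00_eq n α hIA, Magnus_gen]
      simp [magnusUnit]
    obtain ⟨h10, h11⟩ := mem_lowerTriv.mp (Magnus_mem_lowerTriv n (α (gen n i)))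
    have h01 : (Magnus n (α (gen n i))).val 0 1 = ∑ j, C (a i j) * X j := by
      rw [← hspec i]
      exact Finset.sum_congr rfl (fun j _ => smul_eq_C_mul _ _)
    rw [hΦval, Magnus_gen]
    show (Ψ (gen n i)).val = _
    simp only [hΨ, MonoidHom.comp_apply]
    ext x y
    fin_cases x <;> fin_cases y <;>
      simp [magnusUnit, Matrix.map_apply, barHom_C, barHom_X, h00, h01, h10, h11]
  have hΨΦ : ∀ g, Ψ g = Φ g := by
    have hcomp : Ψ.comp (QuotientGroup.mk' (derivedSeries (FreeGroup (Fin n)) 2))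
        = Φ.comp (QuotientGroup.mk' (derivedSeries (FreeGroup (Fin n)) 2)) :=
      FreeGroup.ext_hom _ _ (fun i => hgen i)
    intro g
    refine QuotientGroup.induction_on g (fun w => ?_)
    exact DFunLike.congr_fun hcomp w
  intro g
  have h := congrArg Units.val (hΨΦ g)
  simpa [hΨ, hΦval g] using h
end
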